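/- Let c and c' be two coefficient families, each with radius of convergence at least R for some R > 0, and suppose c(W) ≠ c'(W) for some word W of length n. Then for every k ≥ n+1 there exist k×k real matrices N_1,…,N_d, each tridiagonal antisymmetric, such that the families (c(V) · N_V)_{V a word} and (c'(V) · N_V)_{V a word} are both summable in the space of k×k real matrices and ∑'_V c(V) · N_V ≠ ∑'_V c'(V) · N_V. -/

import Mathlib

open Matrix

/-- A `k × k` real matrix is tridiagonal antisymmetric if `N + Nᵀ = 0` and its `(a,b)`-entry
vanishes whenever `|a - b| ≠ 1`. -/
def TriAnti {k : ℕ} (N : Matrix (Fin k) (Fin k) ℝ) : Prop :=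
  N + Nᵀ = 0 ∧ ∀ a b : Fin k, ((a : ℤ) - (b : ℤ)).natAbs ≠ 1 → N a b = 0

noncomputable section

/-- the tridiagonal antisymmetric matrices tailored to the word `W`. -/
def wN {d : ℕ} (W : List (Fin d)) (ε : ℝ) (k : ℕ) (j : Fin d) :
    Matrix (Fin k) (Fin k) ℝ :=
  Matrix.of fun a b =>
    (if (b : ℕ) = (a : ℕ) + 1 ∧ W[(a:ℕ)]? = some j then ε else 0)
      - (if (a : ℕ) = (b : ℕ) + 1 ∧ W[(b:ℕ)]? = some j then ε else 0)

lemma wN_triAnti {d : ℕ} (W : List (Fin d)) (ε : ℝ) (k : ℕ) (j : Fin d) :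
    TriAnti (wN W ε k j) := by
  constructor
  · ext a b
    simp only [Matrix.add_apply, Matrix.transpose_apply, wN, Matrix.of_apply,
      Matrix.zero_apply]
    ring
  · intro a b hab
    simp only [wN, Matrix.of_apply]
    rw [if_neg, if_neg, sub_zero]
    · rintro ⟨h, -⟩; exact hab (by omega)
    · rintro ⟨h, -⟩; exact hab (by omega)

/-- products of the `wN` matrices vanish below reach. -/
lemma wN_prod_far {d : ℕ} (W : List (Fin d)) (ε : ℝ) (k : ℕ) :
    ∀ (L : List (Fin d)) (a b : Fin k), (a : ℕ) + L.length < (b : ℕ) →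
      ((L.map (wN W ε k)).prod) a b = 0 := by
  intro L
  induction L with
  | nil =>
    intro a b hab
    simp only [List.map_nil, List.prod_nil]
    exact Matrix.one_apply_ne (by intro h; rw [h] at hab; omega)
  | cons v L ih =>
    intro a b hab
    rw [List.map_cons, List.prod_cons, Matrix.mul_apply]
    apply Finset.sum_eq_zero
    intro x _
    simp only [wN, Matrix.of_apply]
    by_cases h1 : (x : ℕ) = (a : ℕ) + 1 ∧ W[(a:ℕ)]? = some v
    · rw [if_pos h1, ih x b (by simp at hab; omega), mul_zero]
    · rw [if_neg h1, zero_sub]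
      by_cases h2 : (a : ℕ) = (x : ℕ) + 1 ∧ W[(x:ℕ)]? = some v
      · rw [if_pos h2, ih x b (by simp at hab; omega), mul_zero]
      · rw [if_neg h2, neg_zero, zero_mul]

open scoped Classical in
/-- the extremal entry of a product of `wN` matrices. -/
lemma wN_prod_entry {d : ℕ} (W : List (Fin d)) (ε : ℝ) (k : ℕ) :
    ∀ (L : List (Fin d)) (a b : Fin k), (b : ℕ) = (a : ℕ) + L.length →
      ((L.map (wN W ε k)).prod) a b =
        if L <+: W.drop (a : ℕ) then ε ^ L.length else 0 := by
  intro L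
  induction L with
  | nil =>
    intro a b hab
    have : a = b := Fin.ext (by simpa using hab.symm)
    simp [this, Matrix.one_apply_eq]
  | cons v L ih =>
    intro a b hab
    have hlen : (b : ℕ) = (a : ℕ) + L.length + 1 := by simp at hab; omega
    have hck : (a : ℕ) + 1 < k := by have := b.isLt; omega
    set c₀ : Fin k := ⟨(a : ℕ) + 1, hck⟩ with hc₀
    have hvc₀ : (c₀ : ℕ) = (a : ℕ) + 1 := rfl
    have hwa : wN W ε k v a c₀ = (if W[(a:ℕ)]? = some v then ε else 0) := by
      have h2 : ¬((a:ℕ) = (c₀:ℕ) + 1 ∧ W[(c₀:ℕ)]? = some v) := by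
        rintro ⟨h, -⟩; omega
      simp only [wN, Matrix.of_apply, if_neg h2, sub_zero]
      simp [hvc₀]
    have hP : ((L.map (wN W ε k)).prod) c₀ b =
        if L <+: W.drop ((a : ℕ) + 1) then ε ^ L.length else 0 := by
      rw [ih c₀ b (by omega), hvc₀]
    rw [List.map_cons, List.prod_cons, Matrix.mul_apply, Finset.sum_eq_single c₀]
    · rw [hwa, hP]
      by_cases ha : (a : ℕ) < W.length
      · simp only [List.drop_eq_getElem_cons ha, List.cons_prefix_cons]
        by_cases hv : W[(a:ℕ)] = v
        · have hsome : W[(a:ℕ)]? = some v := by rw [List.getElem?_eq_getElem ha, hv]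
          rw [if_pos hsome]
          by_cases hL : L <+: W.drop ((a:ℕ)+1)
          · rw [if_pos hL, if_pos ⟨hv.symm, hL⟩, List.length_cons, pow_succ]
            ring
          · rw [if_neg hL, if_neg (by rintro ⟨-, h⟩; exact hL h), mul_zero]
        · have hns : ¬(W[(a:ℕ)]? = some v) := by
            rw [List.getElem?_eq_getElem ha]
            simpa using hv
          rw [if_neg hns, zero_mul, if_neg (by rintro ⟨h, -⟩; exact hv h.symm)]
      · have hnone : W[(a:ℕ)]? = none := List.getElem?_eq_none (by omega)
        have hdrop : W.drop (a:ℕ) = [] := List.drop_eq_nil_of_le (by omega)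
        have hnp : ¬((v :: L) <+: ([] : List (Fin d))) := by
          intro h; simpa using h.length_le
        rw [if_neg (by rw [hnone]; simp), zero_mul, hdrop, if_neg hnp]
    · intro x _ hx
      have h1 : ¬((x:ℕ) = (a:ℕ)+1 ∧ W[(a:ℕ)]? = some v) := by
        rintro ⟨h, -⟩
        exact hx (Fin.ext (by omega))
      by_cases h2 : (a:ℕ) = (x:ℕ)+1 ∧ W[(x:ℕ)]? = some v
      · obtain ⟨h2a, -⟩ := h2
        rw [wN_prod_far W ε k L x b (by omega), mul_zero]
      · simp only [wN, Matrix.of_apply, if_neg h1, if_neg h2, sub_zero, zero_mul]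
    · intro h; exact absurd (Finset.mem_univ c₀) h

lemma sum_ind {k : ℕ} (m : ℕ) {ε : ℝ} (hε : 0 ≤ ε) :
    ∑ x : Fin k, (if (x : ℕ) = m then ε else 0) ≤ ε := by
  rcases lt_or_ge m k with h | h
  · rw [show (fun x : Fin k => if (x : ℕ) = m then ε else 0)
        = fun x : Fin k => if x = ⟨m, h⟩ then ε else 0 from
      funext fun x => by simp [Fin.ext_iff]]
    simp [Finset.sum_ite_eq']
  · calc ∑ x : Fin k, (if (x : ℕ) = m then ε else 0) = 0 := by
          apply Finset.sum_eq_zero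
          intro x _
          rw [if_neg (by have := x.isLt; omega)]
    _ ≤ ε := hε

lemma wN_row_sum {d : ℕ} (W : List (Fin d)) {ε : ℝ} (hε : 0 ≤ ε) (k : ℕ)
    (j : Fin d) (a : Fin k) : ∑ x : Fin k, |wN W ε k j a x| ≤ 2 * ε := by
  have hb : ∀ x : Fin k, |wN W ε k j a x| ≤
      (if (x : ℕ) = (a : ℕ) + 1 then ε else 0) +
      (if (a : ℕ) = (x : ℕ) + 1 then ε else 0) := by
    intro x
    simp only [wN, Matrix.of_apply]
    refine (abs_sub _ _).trans ?_
    gcongr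
    · rw [abs_of_nonneg (by positivity)]
      split_ifs with h1 h2
      · exact le_rfl
      · exact absurd h1.1 h2
      · exact hε
      · exact le_rfl
    · rw [abs_of_nonneg (by positivity)]
      split_ifs with h1 h2
      · exact le_rfl
      · exact absurd h1.1 h2
      · exact hε
      · exact le_rfl
  have key : ∑ x : Fin k, |wN W ε k j a x| ≤
      (∑ x : Fin k, (if (x : ℕ) = (a : ℕ) + 1 then ε else 0)) +
      (∑ x : Fin k, (if (a : ℕ) = (x : ℕ) + 1 then ε else 0)) := by
    rw [← Finset.sum_add_distrib]
    exact Finset.sum_le_sum fun x _ => hb x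
  have h2 : (∑ x : Fin k, (if (a : ℕ) = (x : ℕ) + 1 then ε else 0))
      = ∑ x : Fin k, (if (x : ℕ) = (a : ℕ) - 1 ∧ 1 ≤ (a : ℕ) then ε else 0) := by
    apply Finset.sum_congr rfl
    intro x _
    congr 1
    simp only [eq_iff_iff]
    omega
  have h3 : (∑ x : Fin k, (if (x : ℕ) = (a : ℕ) - 1 ∧ 1 ≤ (a : ℕ) then ε else 0)) ≤ ε := by
    rcases le_or_gt 1 (a : ℕ) with h | h
    · calc (∑ x : Fin k, (if (x : ℕ) = (a : ℕ) - 1 ∧ 1 ≤ (a : ℕ) then ε else 0))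
          = ∑ x : Fin k, (if (x : ℕ) = (a : ℕ) - 1 then ε else 0) := by
            apply Finset.sum_congr rfl
            intro x _
            congr 1
            simp only [eq_iff_iff]
            omega
        _ ≤ ε := sum_ind _ hε
    · calc (∑ x : Fin k, (if (x : ℕ) = (a : ℕ) - 1 ∧ 1 ≤ (a : ℕ) then ε else 0)) = 0 := by
            apply Finset.sum_eq_zero
            intro x _
            rw [if_neg (by omega)]
        _ ≤ ε := hε
  have h1 : (∑ x : Fin k, (if (x : ℕ) = (a : ℕ) + 1 then ε else 0)) ≤ ε := sum_ind _ hε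
  rw [h2] at key
  linarith

lemma wN_prod_bound {d : ℕ} (W : List (Fin d)) {ε : ℝ} (hε : 0 ≤ ε) (k : ℕ) :
    ∀ (L : List (Fin d)) (a b : Fin k),
      |((L.map (wN W ε k)).prod) a b| ≤ (2 * ε) ^ L.length := by
  intro L
  induction L with
  | nil =>
    intro a b
    simp only [List.map_nil, List.prod_nil, pow_zero]
    rcases eq_or_ne a b with h | h
    · subst h
      rw [Matrix.one_apply_eq]
      simp
    · rw [Matrix.one_apply_ne h]
      simp
  | cons v L ih =>
    intro a b
    rw [List.map_cons, List.prod_cons, Matrix.mul_apply]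
    calc |∑ x : Fin k, wN W ε k v a x * ((L.map (wN W ε k)).prod) x b|
        ≤ ∑ x : Fin k, |wN W ε k v a x * ((L.map (wN W ε k)).prod) x b| :=
          Finset.abs_sum_le_sum_abs _ _
      _ ≤ ∑ x : Fin k, |wN W ε k v a x| * (2 * ε) ^ L.length := by
          apply Finset.sum_le_sum
          intro x _
          rw [abs_mul]
          exact mul_le_mul_of_nonneg_left (ih x b) (abs_nonneg _)
      _ = (∑ x : Fin k, |wN W ε k v a x|) * (2 * ε) ^ L.length := by
          rw [Finset.sum_mul]
      _ ≤ (2 * ε) * (2 * ε) ^ L.length := by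
          apply mul_le_mul_of_nonneg_right (wN_row_sum W hε k v a) (by positivity)
      _ = (2 * ε) ^ (v :: L).length := by
          rw [List.length_cons, pow_succ]; ring

set_option maxHeartbeats 2000000 in
/-- if two coefficient families `c`, `c'` with radius of convergence at least
`R > 0` differ at a word `W` of length `n`, then for every `k ≥ n + 1` there are tridiagonal
antisymmetric `k × k` real matrices `N_1, …, N_d` such that both `(c(V) • N_V)_V` and
`(c'(V) • N_V)_V` are summable and their sums differ. -/
theorem stmt13 (d : ℕ) (hd : 0 < d) (c c' : List (Fin d) → ℝ) (R : ℝ) (hR : 0 < R)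
    (hc : Summable fun V : List (Fin d) => |c V| * R ^ V.length)
    (hc' : Summable fun V : List (Fin d) => |c' V| * R ^ V.length)
    (W : List (Fin d)) (hW : c W ≠ c' W) (k : ℕ) (hk : W.length + 1 ≤ k) :
    ∃ N : Fin d → Matrix (Fin k) (Fin k) ℝ,
      (∀ j, TriAnti (N j)) ∧
      Summable (fun V : List (Fin d) => c V • (V.map N).prod) ∧
      Summable (fun V : List (Fin d) => c' V • (V.map N).prod) ∧
      (∑' V : List (Fin d), c V • (V.map N).prod) ≠
        ∑' V : List (Fin d), c' V • (V.map N).prod := by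
  classical
  set n := W.length with hn
  set Sc := ∑' V : List (Fin d), |c V| * R ^ V.length with hScdef
  set Sc' := ∑' V : List (Fin d), |c' V| * R ^ V.length with hSc'def
  set S := Sc + Sc' with hSdef
  have hSc0 : 0 ≤ Sc := tsum_nonneg fun V => by positivity
  have hSc'0 : 0 ≤ Sc' := tsum_nonneg fun V => by positivity
  have hS0 : 0 ≤ S := by rw [hSdef]; linarith
  set δ := |c W - c' W| with hδdef
  have hδ : 0 < δ := abs_pos.2 (sub_ne_zero.2 hW)
  set ε := min (R / 2) (δ * R ^ (n + 1) / (2 ^ (n + 2) * (S + 1))) with hεdef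
  have hε0 : 0 < ε := lt_min (by linarith) (by positivity)
  have h2ε : 2 * ε ≤ R := by
    have h := min_le_left (R / 2) (δ * R ^ (n + 1) / (2 ^ (n + 2) * (S + 1)))
    rw [← hεdef] at h
    linarith
  set N := wN W ε k with hNdef
  -- entry bound
  have hPb : ∀ (V : List (Fin d)) (a b : Fin k),
      |((V.map N).prod) a b| ≤ R ^ V.length := by
    intro V a b
    refine (wN_prod_bound W hε0.le k V a b).trans ?_
    exact pow_le_pow_left₀ (by linarith) h2ε _
  -- generic summability
  have hsum : ∀ (f : List (Fin d) → ℝ),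
      Summable (fun V : List (Fin d) => |f V| * R ^ V.length) →
      Summable (fun V : List (Fin d) => f V • (V.map N).prod) := by
    intro f hf
    refine Pi.summable.2 fun a => Pi.summable.2 fun b => ?_
    have hfe : (fun V : List (Fin d) => (f V • (V.map N).prod) a b)
        = fun V : List (Fin d) => f V * ((V.map N).prod) a b := rfl
    rw [hfe]
    apply Summable.of_abs
    refine Summable.of_nonneg_of_le (fun V => abs_nonneg _) (fun V => ?_) hf
    rw [abs_mul]
    exact mul_le_mul_of_nonneg_left (hPb V a b) (abs_nonneg _)
  have hs1 : Summable (fun V : List (Fin d) => c V • (V.map N).prod) := hsum c hc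
  have hs2 : Summable (fun V : List (Fin d) => c' V • (V.map N).prod) := hsum c' hc'
  refine ⟨N, fun j => wN_triAnti W ε k j, hs1, hs2, ?_⟩
  intro hEq
  -- evaluate at the corner entry
  set i0 : Fin k := ⟨0, by omega⟩ with hi0
  set i1 : Fin k := ⟨n, by omega⟩ with hi1
  set g : List (Fin d) → ℝ :=
    fun V => (c V - c' V) * ((V.map N).prod) i0 i1 with hgdef
  have hga : Summable (fun V : List (Fin d) => |c V - c' V| * R ^ V.length) := by
    refine Summable.of_nonneg_of_le (fun V => by positivity) (fun V => ?_) (hc.add hc')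
    have h1 : |c V - c' V| ≤ |c V| + |c' V| := abs_sub _ _
    have h2 : (0:ℝ) ≤ R ^ V.length := by positivity
    nlinarith
  have hTle : (∑' V : List (Fin d), |c V - c' V| * R ^ V.length) ≤ S := by
    have h1 : (∑' V : List (Fin d), |c V - c' V| * R ^ V.length)
        ≤ ∑' V : List (Fin d), (|c V| * R ^ V.length + |c' V| * R ^ V.length) := by
      refine Summable.tsum_le_tsum (fun V => ?_) hga (hc.add hc')
      have h1 : |c V - c' V| ≤ |c V| + |c' V| := abs_sub _ _
      have h2 : (0:ℝ) ≤ R ^ V.length := by positivity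
      nlinarith
    rwa [Summable.tsum_add hc hc'] at h1
  have hg : Summable g := by
    apply Summable.of_abs
    refine Summable.of_nonneg_of_le (fun V => abs_nonneg _) (fun V => ?_) hga
    show |(c V - c' V) * ((V.map N).prod) i0 i1| ≤ _
    rw [abs_mul]
    exact mul_le_mul_of_nonneg_left (hPb V i0 i1) (abs_nonneg _)
  have hgc : Summable (fun V : List (Fin d) => c V * ((V.map N).prod) i0 i1) :=
    Pi.summable.1 (Pi.summable.1 hs1 i0) i1
  have hgc' : Summable (fun V : List (Fin d) => c' V * ((V.map N).prod) i0 i1) :=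
    Pi.summable.1 (Pi.summable.1 hs2 i0) i1
  have e1 : (∑' V : List (Fin d), c V • (V.map N).prod) i0 i1
      = ∑' V : List (Fin d), c V * ((V.map N).prod) i0 i1 := by
    exact (congrFun (tsum_apply hs1) i1).trans ((tsum_apply (Pi.summable.1 hs1 i0)).trans (tsum_congr fun V => rfl))
  have e2 : (∑' V : List (Fin d), c' V • (V.map N).prod) i0 i1
      = ∑' V : List (Fin d), c' V * ((V.map N).prod) i0 i1 := by
    exact (congrFun (tsum_apply hs2) i1).trans ((tsum_apply (Pi.summable.1 hs2 i0)).trans (tsum_congr fun V => rfl))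
  have h0 : (∑' V : List (Fin d), g V) = 0 := by
    have hgfun : g = fun V : List (Fin d) =>
        c V * ((V.map N).prod) i0 i1 - c' V * ((V.map N).prod) i0 i1 :=
      funext fun V => by rw [hgdef]; ring
    rw [hgfun, Summable.tsum_sub hgc hgc', ← e1, ← e2, hEq, sub_self]
  -- the term at W
  have hi1v : (i1 : ℕ) = (i0 : ℕ) + W.length := by simp [hi0, hi1, hn]
  have hPW : ((W.map N).prod) i0 i1 = ε ^ n := by
    rw [hNdef, wN_prod_entry W ε k W i0 i1 hi1v]
    rw [if_pos (by simp [hi0, List.prefix_refl]), hn]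
  have hgW : g W = (c W - c' W) * ε ^ n := by
    show (c W - c' W) * ((W.map N).prod) i0 i1 = _
    rw [hPW]
  -- vanishing for short words other than W
  have hP0 : ∀ V : List (Fin d), V ≠ W → V.length ≤ n →
      ((V.map N).prod) i0 i1 = 0 := by
    intro V hVW hVn
    rcases lt_or_eq_of_le hVn with h | h
    · exact wN_prod_far W ε k V i0 i1 (by simp [hi0, hi1]; omega)
    · rw [hNdef, wN_prod_entry W ε k V i0 i1 (by simp [hi0, hi1]; omega)]
      rw [if_neg]
      intro hpre
      rw [show ((i0:Fin k) : ℕ) = 0 from rfl, List.drop_zero] at hpre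
      exact hVW (hpre.eq_of_length (by rw [h]))
  -- pointwise bound on the remainder
  set t := 2 * ε / R with htdef
  have ht0 : 0 ≤ t := by positivity
  have ht1 : t ≤ 1 := by rw [htdef, div_le_one hR]; linarith
  set D : List (Fin d) → ℝ :=
    fun V => |c V - c' V| * R ^ V.length * t ^ (n + 1) with hDdef
  have hDsum : Summable D := hga.mul_right _
  have hb : ∀ V : List (Fin d), |if V = W then 0 else g V| ≤ D V := by
    intro V
    by_cases hVW : V = W
    · rw [if_pos hVW, abs_zero, hDdef]
      positivity
    · rw [if_neg hVW]
      rcases le_or_gt V.length n with hl | hl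
      · have hgV0 : g V = 0 := by
          show (c V - c' V) * ((V.map N).prod) i0 i1 = 0
          rw [hP0 V hVW hl, mul_zero]
        rw [hgV0, abs_zero, hDdef]
        positivity
      · have hstep : |g V| ≤ |c V - c' V| * (2 * ε) ^ V.length := by
          show |(c V - c' V) * ((V.map N).prod) i0 i1| ≤ _
          rw [abs_mul]
          exact mul_le_mul_of_nonneg_left (wN_prod_bound W hε0.le k V i0 i1) (abs_nonneg _)
        have hexp : (2 * ε) ^ V.length = R ^ V.length * t ^ V.length := by
          rw [htdef, ← mul_pow]
          congr 1
          field_simp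
        have hmono : t ^ V.length ≤ t ^ (n + 1) :=
          pow_le_pow_of_le_one ht0 ht1 (by omega)
        calc |g V| ≤ |c V - c' V| * (2 * ε) ^ V.length := hstep
          _ = |c V - c' V| * (R ^ V.length * t ^ V.length) := by rw [hexp]
          _ ≤ |c V - c' V| * (R ^ V.length * t ^ (n + 1)) := by
              have hcc : (0:ℝ) ≤ |c V - c' V| := abs_nonneg _
              have hRp : (0:ℝ) ≤ R ^ V.length := by positivity
              exact mul_le_mul_of_nonneg_left
                (mul_le_mul_of_nonneg_left hmono hRp) hcc
          _ = D V := by rw [hDdef]; ring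
  have hiteSum : Summable (fun V : List (Fin d) => if V = W then 0 else g V) := by
    apply Summable.of_abs
    exact Summable.of_nonneg_of_le (fun V => abs_nonneg _) hb hDsum
  have hsplit := Summable.tsum_eq_add_tsum_ite hg W
  set r := ∑' V : List (Fin d), (if V = W then 0 else g V) with hrdef
  have hr1 : |r| ≤ ∑' V : List (Fin d), D V := by
    calc |r| ≤ ∑' V : List (Fin d), |if V = W then 0 else g V| := by
          rw [hrdef]
          have := norm_tsum_le_tsum_norm
            (f := fun V : List (Fin d) => if V = W then 0 else g V)
            (Summable.of_nonneg_of_le (fun V => abs_nonneg _) hb hDsum)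
          simpa using this
      _ ≤ ∑' V : List (Fin d), D V := Summable.tsum_le_tsum hb
          (Summable.of_nonneg_of_le (fun V => abs_nonneg _) hb hDsum) hDsum
  have hr2 : (∑' V : List (Fin d), D V) ≤ t ^ (n + 1) * S := by
    have he : (∑' V : List (Fin d), D V)
        = (∑' V : List (Fin d), |c V - c' V| * R ^ V.length) * t ^ (n + 1) := by
      rw [hDdef, tsum_mul_right]
    rw [he, mul_comm]
    have htp : (0:ℝ) ≤ t ^ (n + 1) := by positivity
    exact mul_le_mul_of_nonneg_left hTle htp
  -- the key numeric inequality
  have hkey : t ^ (n + 1) * S < δ * ε ^ n := by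
    have hεle : ε ≤ δ * R ^ (n + 1) / (2 ^ (n + 2) * (S + 1)) :=
      min_le_right _ _
    have hRp : (0:ℝ) < R ^ (n + 1) := pow_pos hR _
    have hq : (0:ℝ) < 2 ^ (n + 1) := by positivity
    have hA : ε * (2 ^ (n + 2) * (S + 1)) ≤ δ * R ^ (n + 1) := by
      rw [← le_div_iff₀ (by positivity)]
      exact hεle
    have h2p : (2:ℝ) ^ (n + 2) = 2 * 2 ^ (n + 1) := by rw [pow_succ]; ring
    rw [h2p] at hA
    have hlt : 2 ^ (n + 1) * ε * S / R ^ (n + 1) < δ := by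
      rw [div_lt_iff₀ hRp]
      nlinarith [mul_pos (mul_pos hq hε0) (show (0:ℝ) < S + 2 by linarith)]
    have hform : t ^ (n + 1) * S = ε ^ n * (2 ^ (n + 1) * ε * S / R ^ (n + 1)) := by
      rw [htdef, div_pow, mul_pow]
      field_simp
      ring
    rw [hform]
    have hεn : (0:ℝ) < ε ^ n := pow_pos hε0 n
    calc ε ^ n * (2 ^ (n + 1) * ε * S / R ^ (n + 1)) < ε ^ n * δ := by
          exact mul_lt_mul_of_pos_left hlt hεn
      _ = δ * ε ^ n := by ring
  -- contradiction
  have hgWabs : |g W| = δ * ε ^ n := by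
    rw [hgW, abs_mul, ← hδdef, abs_of_pos (pow_pos hε0 n)]
  have hcontr : g W + r = 0 := by rw [← hsplit]; exact h0
  have : |g W| = |r| := by
    rw [show g W = -r from by linarith, abs_neg]
  rw [hgWabs] at this
  have : δ * ε ^ n ≤ t ^ (n + 1) * S := by
    rw [this]
    exact hr1.trans hr2
  linarith
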